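/- Let F_12(t; θ_1, θ_2) = P(Z_1²/θ_1 + Z_2²/θ_2 ≤ t) for independent standard normals. Then ∂²F_12(t; θ_1, θ_2)/∂θ_1² = −∫_0^{√(θ_2 t)} [ (t − s²/θ_2)^{3/2} θ_1^{-1/2} + (t − s²/θ_2)^{1/2} θ_1^{-3/2} ] φ(√(θ_1(t − s²/θ_2))) φ(s) ds, which is strictly negative for t > 0. -/

import Mathlib

open MeasureTheory ProbabilityTheory Real intervalIntegral

noncomputable def phi : ℝ → ℝ := gaussianPDFReal 0 1

@[fun_prop]
lemma phi_cont : Continuous phi := by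
  unfold phi gaussianPDFReal
  fun_prop

lemma phi_nonneg (x : ℝ) : 0 ≤ phi x := gaussianPDFReal_nonneg 0 1 x

lemma phi_pos (x : ℝ) : 0 < phi x := gaussianPDFReal_pos 0 1 x one_ne_zero

lemma phi_eq (x : ℝ) : phi x = (Real.sqrt (2*π))⁻¹ * rexp (-(x^2)/2) := by
  unfold phi gaussianPDFReal
  norm_num

lemma phi_even (x : ℝ) : phi (-x) = phi x := by rw [phi_eq, phi_eq]; ring_nf

lemma phi_le_one (x : ℝ) : phi x ≤ 1 := by
  rw [phi_eq]
  have h1 : (1:ℝ) ≤ Real.sqrt (2*π) := by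
    rw [show (1:ℝ) = Real.sqrt 1 by simp]
    exact Real.sqrt_le_sqrt (by nlinarith [Real.pi_gt_three])
  have h2 : rexp (-(x^2)/2) ≤ 1 := by
    rw [Real.exp_le_one_iff]; nlinarith [sq_nonneg x]
  calc (Real.sqrt (2*π))⁻¹ * rexp (-(x^2)/2) ≤ 1 * 1 := by
        apply mul_le_mul _ h2 (Real.exp_nonneg _) zero_le_one
        exact inv_le_one_of_one_le₀ h1
    _ = 1 := by ring

lemma phi_int : Integrable phi := integrable_gaussianPDFReal 0 1

lemma phi_sqrt (r : ℝ) (hr : 0 ≤ r) : phi (Real.sqrt r) = (Real.sqrt (2*π))⁻¹ * rexp (-r/2) := by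
  rw [phi_eq, Real.sq_sqrt hr]

noncomputable def Fb (θ₂ t x s : ℝ) : ℝ :=
  (2 * ∫ u in (0:ℝ)..Real.sqrt (x * (t - s^2/θ₂)), phi u) * phi s

noncomputable def Fd (θ₂ t x s : ℝ) : ℝ :=
  Real.sqrt (t - s^2/θ₂) * x ^ (-(1:ℝ)/2)
    * ((Real.sqrt (2*π))⁻¹ * rexp (-(x * (t - s^2/θ₂))/2)) * phi s

noncomputable def Fdd (θ₂ t x s : ℝ) : ℝ :=
  -(1/2) * (Real.sqrt (t - s^2/θ₂) * x ^ (-(3:ℝ)/2)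
      + (t - s^2/θ₂) * Real.sqrt (t - s^2/θ₂) * x ^ (-(1:ℝ)/2))
    * ((Real.sqrt (2*π))⁻¹ * rexp (-(x * (t - s^2/θ₂))/2)) * phi s

lemma rpow_half_neg {x : ℝ} (hx : 0 < x) : x ^ (-(1:ℝ)/2) = (Real.sqrt x)⁻¹ := by
  rw [show -(1:ℝ)/2 = -(1/2) by norm_num, Real.rpow_neg hx.le, Real.sqrt_eq_rpow]

lemma diff1 (θ₂ t : ℝ) (s : ℝ) {x : ℝ} (hx : 0 < x) :
    HasDerivAt (fun y => Fb θ₂ t y s) (Fd θ₂ t x s) x := by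
  set c := t - s^2/θ₂ with hcdef
  rcases le_or_gt c 0 with hc | hc
  · have hFd : Fd θ₂ t x s = 0 := by
      unfold Fd; rw [← hcdef, Real.sqrt_eq_zero'.mpr hc]; ring
    rw [hFd]
    have hev : (fun y => Fb θ₂ t y s) =ᶠ[nhds x] fun _ => (0:ℝ) := by
      filter_upwards [Ioi_mem_nhds hx] with y hy
      unfold Fb
      rw [← hcdef, Real.sqrt_eq_zero'.mpr (mul_nonpos_of_nonneg_of_nonpos (le_of_lt hy) hc)]
      simp
    exact (hasDerivAt_const x 0).congr_of_eventuallyEq hev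
  · have hxc : 0 < x * c := mul_pos hx hc
    have hr : HasDerivAt (fun y => Real.sqrt (y * c)) (1 / (2 * Real.sqrt (x*c)) * c) x :=
      (Real.hasDerivAt_sqrt hxc.ne').comp x (hasDerivAt_mul_const c)
    have hP : HasDerivAt (fun u => ∫ v in (0:ℝ)..u, phi v) (phi (Real.sqrt (x*c)))
        (Real.sqrt (x*c)) :=
      intervalIntegral.integral_hasDerivAt_right phi_int.intervalIntegrable
        phi_cont.stronglyMeasurable.stronglyMeasurableAtFilter phi_cont.continuousAt
    have hcomp := (((hP.comp x hr).const_mul 2).mul_const (phi s))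
    have heq : (fun y => Fb θ₂ t y s) =ᶠ[nhds x]
        (fun y => 2 * ((fun u => ∫ v in (0:ℝ)..u, phi v) (Real.sqrt (y * c))) * phi s) :=
      Filter.Eventually.of_forall fun y => by unfold Fb; rw [← hcdef]
    have hval : Fd θ₂ t x s
        = 2 * (phi (Real.sqrt (x*c)) * (1 / (2 * Real.sqrt (x*c)) * c)) * phi s := by
      unfold Fd
      rw [← hcdef, phi_sqrt _ hxc.le, Real.sqrt_mul hx.le, rpow_half_neg hx]
      have h1 : Real.sqrt c * Real.sqrt c = c := Real.mul_self_sqrt hc.le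
      have hsx : Real.sqrt x ≠ 0 := ne_of_gt (Real.sqrt_pos.mpr hx)
      have hsc : Real.sqrt c ≠ 0 := ne_of_gt (Real.sqrt_pos.mpr hc)
      field_simp
      linear_combination (phi s) * h1
    rw [hval]
    exact hcomp.congr_of_eventuallyEq heq

lemma diff2 (θ₂ t : ℝ) (s : ℝ) {x : ℝ} (hx : 0 < x) :
    HasDerivAt (fun y => Fd θ₂ t y s) (Fdd θ₂ t x s) x := by
  set c := t - s^2/θ₂ with hcdef
  rcases le_or_gt c 0 with hc | hc
  · have h0 : Real.sqrt c = 0 := Real.sqrt_eq_zero'.mpr hc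
    have hfun : (fun y => Fd θ₂ t y s) = fun _ => (0:ℝ) :=
      funext fun y => by unfold Fd; rw [← hcdef, h0]; ring
    have hval : Fdd θ₂ t x s = 0 := by unfold Fdd; rw [← hcdef, h0]; ring
    rw [hfun, hval]; exact hasDerivAt_const x 0
  · have hp : HasDerivAt (fun y : ℝ => y ^ (-(1:ℝ)/2)) (-(1:ℝ)/2 * x ^ (-(1:ℝ)/2 - 1)) x :=
      Real.hasDerivAt_rpow_const (Or.inl hx.ne')
    have h1 : HasDerivAt (fun y : ℝ => -(y*c)/2) (-c/2) x := by
      simpa using ((hasDerivAt_mul_const c).neg.div_const 2)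
    have he := h1.exp
    have hm := (hp.mul he).const_mul (Real.sqrt c * (Real.sqrt (2*π))⁻¹ * phi s)
    have hfun : (fun y => Fd θ₂ t y s) = fun y =>
        (Real.sqrt c * (Real.sqrt (2*π))⁻¹ * phi s) * (y ^ (-(1:ℝ)/2) * rexp (-(y*c)/2)) :=
      funext fun y => by unfold Fd; rw [← hcdef]; ring
    have hval : Fdd θ₂ t x s = (Real.sqrt c * (Real.sqrt (2*π))⁻¹ * phi s)
        * (-(1:ℝ)/2 * x ^ (-(1:ℝ)/2 - 1) * rexp (-(x*c)/2)
            + x ^ (-(1:ℝ)/2) * (rexp (-(x*c)/2) * (-c/2))) := by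
      unfold Fdd
      rw [← hcdef, show (-(1:ℝ)/2 - 1) = -(3:ℝ)/2 by norm_num]
      ring
    rw [hfun, hval]
    exact hm

lemma contFb (θ₂ t x : ℝ) : Continuous (fun s => Fb θ₂ t x s) := by
  have hP : Continuous (fun u => ∫ v in (0:ℝ)..u, phi v) := phi_int.continuous_primitive 0
  unfold Fb
  exact (continuous_const.mul (hP.comp (Real.continuous_sqrt.comp (by fun_prop)))).mul phi_cont

lemma contFd (θ₂ t x : ℝ) : Continuous (fun s => Fd θ₂ t x s) := by
  unfold Fd
  have h1 : Continuous (fun s : ℝ => Real.sqrt (t - s^2/θ₂)) :=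
    Real.continuous_sqrt.comp (by fun_prop)
  fun_prop

lemma contFdd (θ₂ t x : ℝ) : Continuous (fun s => Fdd θ₂ t x s) := by
  unfold Fdd
  have h1 : Continuous (fun s : ℝ => Real.sqrt (t - s^2/θ₂)) :=
    Real.continuous_sqrt.comp (by fun_prop)
  fun_prop

lemma even_split {f : ℝ → ℝ} (hf : ∀ s, f (-s) = f s)
    (hint : ∀ a b : ℝ, IntervalIntegrable f volume a b) (r : ℝ) :
    ∫ s in (-r)..r, f s = 2 * ∫ s in (0:ℝ)..r, f s := by
  have hneg : ∫ u in (-r)..(0:ℝ), f u = ∫ u in (0:ℝ)..r, f u := by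
    have h := intervalIntegral.integral_comp_neg (a := (0:ℝ)) (b := r) (f := f)
    simp only [hf] at h
    rw [h]
    norm_num
  rw [← intervalIntegral.integral_add_adjacent_intervals (hint (-r) 0) (hint 0 r), hneg]
  ring

/-- `F₁₂(t;θ₁,θ₂) = P(Z₁²/θ₁ + Z₂²/θ₂ ≤ t)` for independent standard normals. -/
noncomputable def F12 (θ₁ θ₂ t : ℝ) : ℝ :=
  (((gaussianReal 0 1).prod (gaussianReal 0 1))
    {z : ℝ × ℝ | z.1 ^ 2 / θ₁ + z.2 ^ 2 / θ₂ ≤ t}).toReal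

lemma rep (θ₂ t : ℝ) (h₂ : 0 < θ₂) (ht : 0 < t) {x : ℝ} (hx : 0 < x) :
    F12 x θ₂ t = 2 * ∫ s in (0:ℝ)..Real.sqrt (θ₂*t), Fb θ₂ t x s := by
  set μ := gaussianReal 0 1 with hμ
  set S : Set (ℝ × ℝ) := {z : ℝ × ℝ | z.1 ^ 2 / x + z.2 ^ 2 / θ₂ ≤ t} with hSdef
  have hS : MeasurableSet S := measurableSet_le (by fun_prop) measurable_const
  -- step 1 : sections over the second coordinate
  have step1 : (μ.prod μ) S = ∫⁻ s, μ {u : ℝ | u^2/x + s^2/θ₂ ≤ t} ∂μ := by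
    calc (μ.prod μ) S = (Measure.map Prod.swap (μ.prod μ)) S := by rw [Measure.prod_swap]
      _ = (μ.prod μ) (Prod.swap ⁻¹' S) := Measure.map_apply measurable_swap hS
      _ = ∫⁻ s, μ (Prod.mk s ⁻¹' (Prod.swap ⁻¹' S)) ∂μ :=
          Measure.prod_apply (hS.preimage measurable_swap)
      _ = ∫⁻ s, μ {u : ℝ | u^2/x + s^2/θ₂ ≤ t} ∂μ := by
          rfl
  -- step 2 : the section measure
  have step2 : ∀ s : ℝ, μ {u : ℝ | u^2/x + s^2/θ₂ ≤ t}
      = ENNReal.ofReal (2 * ∫ u in (0:ℝ)..Real.sqrt (x * (t - s^2/θ₂)), phi u) := by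
    intro s
    set c := t - s^2/θ₂ with hcdef
    have hset : {u : ℝ | u^2/x + s^2/θ₂ ≤ t} = {u : ℝ | u^2 ≤ x * c} := by
      ext u
      simp only [Set.mem_setOf_eq]
      rw [hcdef]
      constructor <;> intro h
      · nlinarith [(div_le_iff₀ hx).mp (by linarith : u^2/x ≤ t - s^2/θ₂)]
      · have : u^2/x ≤ t - s^2/θ₂ := (div_le_iff₀ hx).mpr (by linarith)
        linarith
    rcases le_or_gt 0 (x*c) with hxc | hxc
    · have hIcc : {u : ℝ | u^2 ≤ x*c} = Set.Icc (-Real.sqrt (x*c)) (Real.sqrt (x*c)) := by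
        ext u
        simpa [Set.mem_Icc] using Real.sq_le hxc
      rw [hset, hIcc, hμ, gaussianReal_apply_eq_integral 0 one_ne_zero]
      congr 1
      have hr : 0 ≤ Real.sqrt (x*c) := Real.sqrt_nonneg _
      rw [MeasureTheory.integral_Icc_eq_integral_Ioc,
        ← intervalIntegral.integral_of_le (neg_le_self hr)]
      exact even_split phi_even (fun a b => phi_int.intervalIntegrable) _
    · have hempty : {u : ℝ | u^2 ≤ x*c} = ∅ := by
        ext u
        simp only [Set.mem_setOf_eq, Set.mem_empty_iff_false, iff_false, not_le]
        nlinarith [sq_nonneg u]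
      rw [hset, hempty, Real.sqrt_eq_zero'.mpr hxc.le]
      simp
  -- step 3 : unfold the gaussian density in the outer integral
  have hFbc : Continuous (fun s => Fb θ₂ t x s) := contFb θ₂ t x
  have hFin_cont : Continuous (fun s : ℝ => 2 * ∫ u in (0:ℝ)..Real.sqrt (x * (t - s^2/θ₂)), phi u) := by
    have hP : Continuous (fun u => ∫ v in (0:ℝ)..u, phi v) := phi_int.continuous_primitive 0
    exact continuous_const.mul (hP.comp (Real.continuous_sqrt.comp (by fun_prop)))
  have hFb_nonneg : ∀ s, 0 ≤ Fb θ₂ t x s := fun s => by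
    unfold Fb
    have h1 : 0 ≤ ∫ u in (0:ℝ)..Real.sqrt (x * (t - s^2/θ₂)), phi u :=
      intervalIntegral.integral_nonneg (Real.sqrt_nonneg _) fun u _ => phi_nonneg u
    have := phi_nonneg s
    positivity
  have step3 : (∫⁻ s, ENNReal.ofReal
        (2 * ∫ u in (0:ℝ)..Real.sqrt (x * (t - s^2/θ₂)), phi u) ∂μ)
      = ∫⁻ s, ENNReal.ofReal (Fb θ₂ t x s) ∂(volume : Measure ℝ) := by
    have hg : Measurable (fun s : ℝ => ENNReal.ofReal
        (2 * ∫ u in (0:ℝ)..Real.sqrt (x * (t - s^2/θ₂)), phi u)) :=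
      ENNReal.measurable_ofReal.comp hFin_cont.measurable
    rw [hμ, gaussianReal_of_var_ne_zero 0 one_ne_zero,
      lintegral_withDensity_eq_lintegral_mul _ (measurable_gaussianPDF 0 1) hg]
    congr 1
    funext s
    show gaussianPDF 0 1 s * ENNReal.ofReal _ = _
    rw [gaussianPDF, ← ENNReal.ofReal_mul (gaussianPDFReal_nonneg 0 1 s)]
    congr 1
    unfold Fb phi
    ring
  -- step 4 : to a Bochner integral
  have step4 : F12 x θ₂ t = ∫ s, Fb θ₂ t x s := by
    have h4 : F12 x θ₂ t = (∫⁻ s, ENNReal.ofReal (Fb θ₂ t x s) ∂(volume : Measure ℝ)).toReal := by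
      show ((μ.prod μ) S).toReal = _
      rw [step1, lintegral_congr step2, step3]
    rw [h4, ← MeasureTheory.integral_eq_lintegral_of_nonneg_ae
      (ae_of_all _ hFb_nonneg) hFbc.aestronglyMeasurable]
  -- step 5 : the integrand vanishes outside [-a, a]
  set a := Real.sqrt (θ₂ * t) with hadef
  have ha : 0 ≤ a := Real.sqrt_nonneg _
  have ha2 : a^2 = θ₂ * t := Real.sq_sqrt (by positivity)
  have step5 : ∫ s, Fb θ₂ t x s = ∫ s in Set.Icc (-a) a, Fb θ₂ t x s := by
    refine (setIntegral_eq_integral_of_forall_compl_eq_zero fun s hs => ?_).symm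
    have hs2 : θ₂ * t < s^2 := by
      rcases not_and_or.mp (Set.mem_Icc.not.mp hs) with h | h
      · have := not_le.mp h
        nlinarith
      · have := not_le.mp h
        nlinarith
    have hc : t - s^2/θ₂ < 0 := by
      have : t < s^2/θ₂ := (lt_div_iff₀ h₂).mpr (by linarith)
      linarith
    unfold Fb
    rw [Real.sqrt_eq_zero'.mpr (mul_nonpos_of_nonneg_of_nonpos hx.le hc.le)]
    simp
  -- step 6 and 7 : symmetric interval and evenness
  have hev : ∀ s, Fb θ₂ t x (-s) = Fb θ₂ t x s := fun s => by
    unfold Fb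
    rw [phi_even]
    norm_num
  rw [step4, step5, MeasureTheory.integral_Icc_eq_integral_Ioc,
    ← intervalIntegral.integral_of_le (neg_le_self ha)]
  have hint : ∀ u v : ℝ, IntervalIntegrable (Fb θ₂ t x) volume u v := fun u v =>
    hFbc.intervalIntegrable u v
  exact even_split hev hint a

lemma ball_pos {x : ℝ} (hx : 0 < x) {y : ℝ} (hy : y ∈ Metric.ball x (x/2)) : x/2 < y := by
  have := abs_lt.mp (by simpa [Real.dist_eq] using hy)
  linarith [this.1]

lemma sqrt2pi_inv_le_one : (Real.sqrt (2*π))⁻¹ ≤ 1 := by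
  apply inv_le_one_of_one_le₀
  rw [show (1:ℝ) = Real.sqrt 1 by simp]
  exact Real.sqrt_le_sqrt (by nlinarith [Real.pi_gt_three])

lemma deriv1 (θ₂ t : ℝ) (h₂ : 0 < θ₂) (ht : 0 < t) {x : ℝ} (hx : 0 < x) :
    HasDerivAt (fun y => ∫ s in (0:ℝ)..Real.sqrt (θ₂*t), Fb θ₂ t y s)
      (∫ s in (0:ℝ)..Real.sqrt (θ₂*t), Fd θ₂ t x s) x := by
  have hb := half_pos hx
  refine (intervalIntegral.hasDerivAt_integral_of_dominated_loc_of_deriv_le (Metric.ball_mem_nhds x hb)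
    (F := fun y s => Fb θ₂ t y s) (F' := fun y s => Fd θ₂ t y s)
    (bound := fun _ => Real.sqrt t * (x/2) ^ (-(1:ℝ)/2))
    ?_ ?_ ?_ ?_ ?_ ?_).2
  · exact Filter.Eventually.of_forall fun y => (contFb θ₂ t y).aestronglyMeasurable.restrict
  · exact (contFb θ₂ t x).intervalIntegrable _ _
  · exact (contFd θ₂ t x).aestronglyMeasurable.restrict
  · refine Filter.Eventually.of_forall fun s _ y hy => ?_
    have hy' : 0 < y := lt_trans hb (ball_pos hx hy)
    show ‖Fd θ₂ t y s‖ ≤ Real.sqrt t * (x/2) ^ (-(1:ℝ)/2)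
    set c := t - s^2/θ₂ with hcdef
    rcases le_or_gt c 0 with hc | hc
    · have : Fd θ₂ t y s = 0 := by
        unfold Fd; rw [← hcdef, Real.sqrt_eq_zero'.mpr hc]; ring
      rw [this, norm_zero]
      positivity
    · have h1 : Real.sqrt c ≤ Real.sqrt t := Real.sqrt_le_sqrt (by
        rw [hcdef]; have : 0 ≤ s^2/θ₂ := by positivity
        linarith)
      have h2 : y ^ (-(1:ℝ)/2) ≤ (x/2) ^ (-(1:ℝ)/2) :=
        Real.rpow_le_rpow_of_nonpos hb (ball_pos hx hy).le (by norm_num)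
      have h3 : (Real.sqrt (2*π))⁻¹ * rexp (-(y*c)/2) ≤ 1 :=
        mul_le_one₀ sqrt2pi_inv_le_one (Real.exp_nonneg _) (by
          rw [Real.exp_le_one_iff]
          exact div_nonpos_of_nonpos_of_nonneg
            (neg_nonpos.mpr (le_of_lt (mul_pos hy' hc))) (by norm_num))
      have h4 : phi s ≤ 1 := phi_le_one s
      have hnn : 0 ≤ Fd θ₂ t y s := by
        unfold Fd; rw [← hcdef]
        have := phi_nonneg s
        positivity
      rw [Real.norm_eq_abs, abs_of_nonneg hnn]
      have : Fd θ₂ t y s = Real.sqrt c * y ^ (-(1:ℝ)/2)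
          * ((Real.sqrt (2*π))⁻¹ * rexp (-(y*c)/2)) * phi s := by
        unfold Fd; rw [← hcdef]
      rw [this]
      calc Real.sqrt c * y ^ (-(1:ℝ)/2) * ((Real.sqrt (2*π))⁻¹ * rexp (-(y*c)/2)) * phi s
          ≤ Real.sqrt t * (x/2) ^ (-(1:ℝ)/2) * 1 * 1 := by
            apply mul_le_mul _ h4 (phi_nonneg s) (by positivity)
            apply mul_le_mul _ h3 (by positivity) (by positivity)
            exact mul_le_mul h1 h2 (by positivity) (Real.sqrt_nonneg t)
        _ = Real.sqrt t * (x/2) ^ (-(1:ℝ)/2) := by ring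
  · exact intervalIntegrable_const
  · exact Filter.Eventually.of_forall fun s _ y hy =>
      diff1 θ₂ t s (lt_trans hb (ball_pos hx hy))

lemma deriv2 (θ₂ t : ℝ) (h₂ : 0 < θ₂) (ht : 0 < t) {x : ℝ} (hx : 0 < x) :
    HasDerivAt (fun y => ∫ s in (0:ℝ)..Real.sqrt (θ₂*t), Fd θ₂ t y s)
      (∫ s in (0:ℝ)..Real.sqrt (θ₂*t), Fdd θ₂ t x s) x := by
  have hb := half_pos hx
  refine (intervalIntegral.hasDerivAt_integral_of_dominated_loc_of_deriv_le (Metric.ball_mem_nhds x hb)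
    (F := fun y s => Fd θ₂ t y s) (F' := fun y s => Fdd θ₂ t y s)
    (bound := fun _ => (1/2) * (Real.sqrt t * (x/2) ^ (-(3:ℝ)/2)
      + t * Real.sqrt t * (x/2) ^ (-(1:ℝ)/2)))
    ?_ ?_ ?_ ?_ ?_ ?_).2
  · exact Filter.Eventually.of_forall fun y => (contFd θ₂ t y).aestronglyMeasurable.restrict
  · exact (contFd θ₂ t x).intervalIntegrable _ _
  · exact (contFdd θ₂ t x).aestronglyMeasurable.restrict
  · refine Filter.Eventually.of_forall fun s _ y hy => ?_
    have hy' : 0 < y := lt_trans hb (ball_pos hx hy)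
    show ‖Fdd θ₂ t y s‖ ≤ (1/2) * (Real.sqrt t * (x/2) ^ (-(3:ℝ)/2)
      + t * Real.sqrt t * (x/2) ^ (-(1:ℝ)/2))
    set c := t - s^2/θ₂ with hcdef
    rcases le_or_gt c 0 with hc | hc
    · have : Fdd θ₂ t y s = 0 := by
        unfold Fdd; rw [← hcdef, Real.sqrt_eq_zero'.mpr hc]; ring
      rw [this, norm_zero]
      positivity
    · have hct : c ≤ t := by
        rw [hcdef]; have : 0 ≤ s^2/θ₂ := by positivity
        linarith
      have h1 : Real.sqrt c ≤ Real.sqrt t := Real.sqrt_le_sqrt hct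
      have h2 : y ^ (-(3:ℝ)/2) ≤ (x/2) ^ (-(3:ℝ)/2) :=
        Real.rpow_le_rpow_of_nonpos hb (ball_pos hx hy).le (by norm_num)
      have h2' : y ^ (-(1:ℝ)/2) ≤ (x/2) ^ (-(1:ℝ)/2) :=
        Real.rpow_le_rpow_of_nonpos hb (ball_pos hx hy).le (by norm_num)
      have h3 : (Real.sqrt (2*π))⁻¹ * rexp (-(y*c)/2) ≤ 1 :=
        mul_le_one₀ sqrt2pi_inv_le_one (Real.exp_nonneg _) (by
          rw [Real.exp_le_one_iff]
          exact div_nonpos_of_nonpos_of_nonneg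
            (neg_nonpos.mpr (le_of_lt (mul_pos hy' hc))) (by norm_num))
      have h4 : phi s ≤ 1 := phi_le_one s
      have hA : Real.sqrt c * y ^ (-(3:ℝ)/2) + c * Real.sqrt c * y ^ (-(1:ℝ)/2)
          ≤ Real.sqrt t * (x/2) ^ (-(3:ℝ)/2) + t * Real.sqrt t * (x/2) ^ (-(1:ℝ)/2) := by
        apply add_le_add
        · exact mul_le_mul h1 h2 (by positivity) (Real.sqrt_nonneg t)
        · exact mul_le_mul (mul_le_mul hct h1 (Real.sqrt_nonneg c) ht.le) h2'
            (by positivity) (by positivity)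
      have hKφ : ((Real.sqrt (2*π))⁻¹ * rexp (-(y*c)/2)) * phi s ≤ 1 :=
        mul_le_one₀ h3 (phi_nonneg s) h4
      have habs : ‖Fdd θ₂ t y s‖ = (1/2)
          * ((Real.sqrt c * y ^ (-(3:ℝ)/2) + c * Real.sqrt c * y ^ (-(1:ℝ)/2))
            * (((Real.sqrt (2*π))⁻¹ * rexp (-(y*c)/2)) * phi s)) := by
        rw [Real.norm_eq_abs, abs_of_nonpos (by
          unfold Fdd; rw [← hcdef]
          have := phi_nonneg s
          have h5 : (0:ℝ) ≤ Real.sqrt c * y ^ (-(3:ℝ)/2) + c * Real.sqrt c * y ^ (-(1:ℝ)/2) := by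
            positivity
          have h6 : (0:ℝ) ≤ (Real.sqrt (2*π))⁻¹ * rexp (-(y*c)/2) := by positivity
          have h7 := mul_nonneg (mul_nonneg h5 h6) this
          nlinarith [h7])]
        unfold Fdd; rw [← hcdef]; ring
      rw [habs]
      calc (1/2) * ((Real.sqrt c * y ^ (-(3:ℝ)/2) + c * Real.sqrt c * y ^ (-(1:ℝ)/2))
            * (((Real.sqrt (2*π))⁻¹ * rexp (-(y*c)/2)) * phi s))
          ≤ (1/2) * ((Real.sqrt t * (x/2) ^ (-(3:ℝ)/2) + t * Real.sqrt t * (x/2) ^ (-(1:ℝ)/2)) * 1) := by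
            apply mul_le_mul_of_nonneg_left _ (by norm_num)
            apply mul_le_mul hA hKφ (mul_nonneg (by positivity) (phi_nonneg s)) (by positivity)
        _ = (1/2) * (Real.sqrt t * (x/2) ^ (-(3:ℝ)/2) + t * Real.sqrt t * (x/2) ^ (-(1:ℝ)/2)) := by
            ring
  · exact intervalIntegrable_const
  · exact Filter.Eventually.of_forall fun s _ y hy =>
      diff2 θ₂ t s (lt_trans hb (ball_pos hx hy))

/-- the second partial derivative of `F₁₂` in `θ₁` has an explicit
integral form and is strictly negative. -/
theorem second_deriv_F12 (θ₁ θ₂ t : ℝ) (h₁ : 0 < θ₁) (h₂ : 0 < θ₂) (ht : 0 < t) :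
    deriv (deriv (fun x => F12 x θ₂ t)) θ₁
        = -∫ s in (0:ℝ)..(Real.sqrt (θ₂ * t)),
            ((t - s ^ 2 / θ₂) ^ ((3:ℝ)/2) * θ₁ ^ (-(1:ℝ)/2)
                + (t - s ^ 2 / θ₂) ^ ((1:ℝ)/2) * θ₁ ^ (-(3:ℝ)/2))
              * gaussianPDFReal 0 1 (Real.sqrt (θ₁ * (t - s ^ 2 / θ₂)))
              * gaussianPDFReal 0 1 s
      ∧ deriv (deriv (fun x => F12 x θ₂ t)) θ₁ < 0 := by
  set a := Real.sqrt (θ₂ * t) with hadef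
  have ha0 : 0 ≤ a := Real.sqrt_nonneg _
  have ha : 0 < a := Real.sqrt_pos.mpr (by positivity)
  have ha2 : a^2 = θ₂ * t := Real.sq_sqrt (by positivity)
  set I : ℝ → ℝ := fun s =>
      ((t - s ^ 2 / θ₂) ^ ((3:ℝ)/2) * θ₁ ^ (-(1:ℝ)/2)
          + (t - s ^ 2 / θ₂) ^ ((1:ℝ)/2) * θ₁ ^ (-(3:ℝ)/2))
        * gaussianPDFReal 0 1 (Real.sqrt (θ₁ * (t - s ^ 2 / θ₂)))
        * gaussianPDFReal 0 1 s with hIdef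
  have hF12 : ∀ y : ℝ, 0 < y → HasDerivAt (fun x => F12 x θ₂ t)
      (2 * ∫ s in (0:ℝ)..a, Fd θ₂ t y s) y := by
    intro y hy
    refine ((deriv1 θ₂ t h₂ ht hy).const_mul 2).congr_of_eventuallyEq ?_
    filter_upwards [Ioi_mem_nhds hy] with z hz
    exact rep θ₂ t h₂ ht hz
  have hd1 : deriv (fun x => F12 x θ₂ t)
      =ᶠ[nhds θ₁] fun y => 2 * ∫ s in (0:ℝ)..a, Fd θ₂ t y s := by
    filter_upwards [Ioi_mem_nhds h₁] with y hy
    exact (hF12 y hy).deriv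
  have hd2 : deriv (deriv (fun x => F12 x θ₂ t)) θ₁
      = 2 * ∫ s in (0:ℝ)..a, Fdd θ₂ t θ₁ s := by
    rw [hd1.deriv_eq]
    exact ((deriv2 θ₂ t h₂ ht h₁).const_mul 2).deriv
  -- pointwise identification of the integrand on [0, a]
  have hpt : Set.EqOn (fun s => Fdd θ₂ t θ₁ s) (fun s => -(1/2) * I s) (Set.uIcc (0:ℝ) a) := by
    intro s hs
    rw [Set.uIcc_of_le ha0] at hs
    obtain ⟨hs0, hsa⟩ := hs
    have hc : 0 ≤ t - s^2/θ₂ := by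
      have hs2 : s^2 ≤ θ₂ * t := by nlinarith
      have : s^2/θ₂ ≤ t := by
        rw [div_le_iff₀ h₂]; linarith
      linarith
    set c := t - s^2/θ₂ with hcdef
    have e1 : c ^ ((1:ℝ)/2) = Real.sqrt c := (Real.sqrt_eq_rpow c).symm
    have e2 : c ^ ((3:ℝ)/2) = c * Real.sqrt c := by
      rcases eq_or_lt_of_le hc with h | h
      · rw [← h, Real.sqrt_zero, Real.zero_rpow (by norm_num), mul_zero]
      · rw [show (3:ℝ)/2 = 1 + 1/2 by norm_num, Real.rpow_add h, Real.rpow_one,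
          ← Real.sqrt_eq_rpow]
    have e3 : gaussianPDFReal 0 1 (Real.sqrt (θ₁ * c))
        = (Real.sqrt (2*π))⁻¹ * rexp (-(θ₁ * c)/2) :=
      phi_sqrt _ (mul_nonneg h₁.le hc)
    show Fdd θ₂ t θ₁ s = -(1/2) * I s
    rw [hIdef]
    unfold Fdd phi
    simp only [← hcdef, e1, e2, e3]
    ring
  have hIeq : 2 * ∫ s in (0:ℝ)..a, Fdd θ₂ t θ₁ s = -∫ s in (0:ℝ)..a, I s := by
    rw [intervalIntegral.integral_congr hpt, intervalIntegral.integral_const_mul]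
    ring
  -- positivity of the integral
  have hc_cont : Continuous fun s : ℝ => t - s^2/θ₂ := by fun_prop
  have hIcont : Continuous I := by
    have hr1 : Continuous fun s : ℝ => (t - s^2/θ₂) ^ ((3:ℝ)/2) :=
      continuous_iff_continuousAt.mpr fun s =>
        (Real.continuousAt_rpow_const _ _ (Or.inr (by norm_num))).comp hc_cont.continuousAt
    have hr2 : Continuous fun s : ℝ => (t - s^2/θ₂) ^ ((1:ℝ)/2) :=
      continuous_iff_continuousAt.mpr fun s =>
        (Real.continuousAt_rpow_const _ _ (Or.inr (by norm_num))).comp hc_cont.continuousAt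
    have hg : Continuous fun s : ℝ => gaussianPDFReal 0 1 (Real.sqrt (θ₁ * (t - s^2/θ₂))) :=
      phi_cont.comp (Real.continuous_sqrt.comp (by fun_prop))
    rw [hIdef]
    exact (((hr1.mul continuous_const).add (hr2.mul continuous_const)).mul hg).mul phi_cont
  have hIpos : 0 < ∫ s in (0:ℝ)..a, I s := by
    apply intervalIntegral.intervalIntegral_pos_of_pos_on (hIcont.intervalIntegrable 0 a) _ ha
    intro s hs
    have hc : 0 < t - s^2/θ₂ := by
      have hs2 : s^2 < θ₂ * t := by nlinarith [hs.1, hs.2]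
      have : s^2/θ₂ < t := by rw [div_lt_iff₀ h₂]; linarith
      linarith
    rw [hIdef]
    have p1 : 0 < (t - s^2/θ₂) ^ ((3:ℝ)/2) := Real.rpow_pos_of_pos hc _
    have p2 : 0 < (t - s^2/θ₂) ^ ((1:ℝ)/2) := Real.rpow_pos_of_pos hc _
    have p3 : 0 < θ₁ ^ (-(1:ℝ)/2) := Real.rpow_pos_of_pos h₁ _
    have p4 : 0 < θ₁ ^ (-(3:ℝ)/2) := Real.rpow_pos_of_pos h₁ _
    have p5 := gaussianPDFReal_pos 0 1 (Real.sqrt (θ₁ * (t - s^2/θ₂))) one_ne_zero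
    have p6 := gaussianPDFReal_pos 0 1 s one_ne_zero
    exact mul_pos (mul_pos (add_pos (mul_pos p1 p3) (mul_pos p2 p4)) p5) p6
  refine ⟨?_, ?_⟩
  · rw [hd2, hIeq]
  · rw [hd2, hIeq]
    exact neg_neg_of_pos hIpos
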